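/- (Corollary 1: global convergence in matching pennies.) Let t ↦ (X(t), y(t)), defined for all t ≥ 0, be a differentiable solution of the replicator dynamics for the matching pennies game such that all entries of X(t) and y(t) remain in (0,1) for all t. Then y₁(t) → 1/2 as t → ∞, i.e. Y's strategy converges to the Nash equilibrium strategy y* = (1/2, 1/2), regardless of the initial strategies X(0), y(0). -/

import Mathlib

section AuxForStmt12
open Filter Set

lemma drop_lemma (f f' : ℝ → ℝ) (a b m : ℝ) (hab : a ≤ b)
    (hd : ∀ t ∈ Set.Icc a b, HasDerivAt f (f' t) t)
    (hle : ∀ t ∈ Set.Icc a b, f' t ≤ -m) :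
    f b ≤ f a - m * (b - a) := by
  have key : AntitoneOn (fun t => f t + m * t) (Set.Icc a b) := by
    have hg : ∀ t ∈ Set.Icc a b, HasDerivAt (fun s => f s + m * s) (f' t + m) t := by
      intro t ht
      exact ((hd t ht).add ((hasDerivAt_id t).const_mul m)).congr_deriv (by ring)
    apply antitoneOn_of_deriv_nonpos (convex_Icc a b)
    · exact fun t ht => (hg t ht).continuousAt.continuousWithinAt
    · intro t ht
      rw [interior_Icc] at ht
      exact (hg t (Set.mem_Icc_of_Ioo ht)).differentiableAt.differentiableWithinAt
    · intro t ht
      rw [interior_Icc] at ht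
      have h1 := (hg t (Set.mem_Icc_of_Ioo ht)).deriv
      rw [h1]
      have := hle t (Set.mem_Icc_of_Ioo ht)
      linarith
  have h2 := key (Set.left_mem_Icc.2 hab) (Set.right_mem_Icc.2 hab) hab
  simp only at h2
  linarith

lemma barbalat (Φ b Φ' : ℝ → ℝ) (c K : ℝ) (hc : 0 < c) (hK : 0 < K)
    (hΦd : ∀ t, 0 ≤ t → HasDerivAt Φ (Φ' t) t)
    (hle : ∀ t, 0 ≤ t → Φ' t ≤ -(c * (b t) ^ 2))
    (hm : ∀ t, 0 ≤ t → 0 ≤ Φ t)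
    (hlip : ∀ s t : ℝ, 0 ≤ s → s ≤ t → |b t - b s| ≤ K * (t - s)) :
    Filter.Tendsto b Filter.atTop (nhds 0) := by
  have mono : ∀ s t : ℝ, 0 ≤ s → s ≤ t → Φ t ≤ Φ s := by
    intro s t hs hst
    have := drop_lemma Φ Φ' s t 0 hst
      (fun r hr => hΦd r (le_trans hs hr.1))
      (fun r hr => by
        have h1 := hle r (le_trans hs hr.1)
        nlinarith [sq_nonneg (b r)])
    linarith
  rw [Metric.tendsto_atTop]
  by_contra hcon
  push_neg at hcon
  obtain ⟨ε, hε, h⟩ := hcon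
  set L : ℝ := ε / (2 * K) with hLdef
  have hL : 0 < L := by positivity
  set η : ℝ := c * (ε / 2) ^ 2 * L with hηdef
  have hη : 0 < η := by positivity
  -- key drop
  have key : ∀ s : ℝ, 0 ≤ s → ε ≤ |b s| → Φ (s + L) ≤ Φ s - η := by
    intro s hs hbs
    have := drop_lemma Φ Φ' s (s + L) (c * (ε / 2) ^ 2) (by linarith)
      (fun r hr => hΦd r (le_trans hs hr.1))
      (fun r hr => by
        have hbr : ε / 2 ≤ |b r| := by
          have h1 := hlip s r hs hr.1
          have h2 : |b s| - |b r| ≤ |b r - b s| := by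
            have := abs_sub_abs_le_abs_sub (b s) (b r)
            rwa [abs_sub_comm] at this
          have h3 : K * (r - s) ≤ K * L := by
            have : r - s ≤ L := by linarith [hr.2]
            nlinarith
          have h4 : K * L = ε / 2 := by
            rw [hLdef]; field_simp
          linarith
        have h5 : (ε / 2) ^ 2 ≤ (b r) ^ 2 := by
          have := sq_abs (b r)
          nlinarith [abs_nonneg (b r)]
        have h6 := hle r (le_trans hs hr.1)
        nlinarith)
    have : s + L - s = L := by ring
    rw [this] at this ⊢
    linarith [this]
  -- choose sequence
  simp only [Real.dist_eq, sub_zero] at h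
  choose g hg1 hg2 using h
  set T : ℕ → ℝ := fun n => Nat.rec (g 0) (fun _ prev => g (prev + L)) n with hT
  have hTsucc : ∀ n, T n + L ≤ T (n + 1) := fun n => hg1 (T n + L)
  have hT0 : ∀ n, 0 ≤ T n := by
    intro n
    induction n with
    | zero => exact hg1 0
    | succ k ih => have := hTsucc k; linarith
  have hbT : ∀ n, ε ≤ |b (T n)| := by
    intro n
    cases n with
    | zero => exact hg2 0
    | succ k => exact hg2 (T k + L)
  have claim : ∀ n : ℕ, Φ (T n + L) ≤ Φ 0 - (n + 1 : ℕ) * η := by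
    intro n
    induction n with
    | zero =>
      have h1 := key (T 0) (hT0 0) (hbT 0)
      have h2 := mono 0 (T 0) le_rfl (hT0 0)
      push_cast
      linarith
    | succ k ih =>
      have h1 := key (T (k + 1)) (hT0 (k + 1)) (hbT (k + 1))
      have h2 := mono (T k + L) (T (k + 1)) (by have := hT0 k; linarith) (hTsucc k)
      push_cast at ih ⊢
      linarith
  obtain ⟨n, hn⟩ := exists_nat_gt (Φ 0 / η)
  have h1 := claim n
  have h2 := hm (T n + L) (by have := hT0 n; linarith)
  have h3 : Φ 0 < n * η := by
    rw [div_lt_iff₀ hη] at hn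
    linarith
  have h4 : (n : ℝ) * η ≤ (n + 1 : ℕ) * η := by
    push_cast; nlinarith
  linarith

end AuxForStmt12



/-- Corollary 1: global convergence in matching pennies: For any
differentiable solution `t ↦ (X(t), y(t))`, `t ≥ 0`, of the replicator dynamics for the
matching pennies game whose entries remain in `(0,1)` (columns of `X` and `y` in the
simplex), Y's strategy converges to the Nash equilibrium strategy `y* = (1/2, 1/2)`
as `t → ∞`, regardless of the initial strategies. -/
theorem stmt_12 (U : Fin 2 → Fin 2 → ℝ) (hU : U = ![![1, -1], ![-1, 1]])
    (X : ℝ → Fin 2 → Fin 2 → ℝ) (Y : ℝ → Fin 2 → ℝ)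
    (hXin : ∀ t ≥ (0 : ℝ), ∀ i j, X t i j ∈ Set.Ioo (0 : ℝ) 1)
    (hYin : ∀ t ≥ (0 : ℝ), ∀ j, Y t j ∈ Set.Ioo (0 : ℝ) 1)
    (hXsum : ∀ t ≥ (0 : ℝ), ∀ j, ∑ i : Fin 2, X t i j = 1)
    (hYsum : ∀ t ≥ (0 : ℝ), ∑ j : Fin 2, Y t j = 1)
    -- replicator dynamics of X : ẋ_{i|j} = x_{i|j}(g_{ij} − Σ_{i'} x_{i'|j} g_{i'j}),
    -- g_{ij} = y_j Σ_{j'} u_{ij'} y_{j'}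
    (hX : ∀ t ≥ (0 : ℝ), ∀ i j, HasDerivAt (fun s => X s i j)
      (X t i j * ((Y t j * ∑ j' : Fin 2, U i j' * Y t j') -
        ∑ i' : Fin 2, X t i' j * (Y t j * ∑ j' : Fin 2, U i' j' * Y t j'))) t)
    -- replicator dynamics of Y : ẏ_j = −y_j(h_j − Σ_{j'} y_{j'} h_{j'}),
    -- h_j = Σ_i u_{ij} x_i^st + Σ_i x_{i|j} Σ_{j'} u_{ij'} y_{j'}
    (hY : ∀ t ≥ (0 : ℝ), ∀ j, HasDerivAt (fun s => Y s j)
      (-(Y t j * (((∑ i : Fin 2, U i j * (∑ j' : Fin 2, X t i j' * Y t j')) +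
          ∑ i : Fin 2, X t i j * ∑ j' : Fin 2, U i j' * Y t j') -
        ∑ j₂ : Fin 2, Y t j₂ *
          ((∑ i : Fin 2, U i j₂ * (∑ j' : Fin 2, X t i j' * Y t j')) +
            ∑ i : Fin 2, X t i j₂ * ∑ j' : Fin 2, U i j' * Y t j')))) t) :
    Filter.Tendsto Y Filter.atTop (nhds ![1/2, 1/2]) := by
  subst hU
  -- basic facts
  have hY1 : ∀ t ≥ (0:ℝ), Y t 1 = 1 - Y t 0 := by
    intro t ht
    have := hYsum t ht
    rw [Fin.sum_univ_two] at this
    linarith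
  have hX1 : ∀ t ≥ (0:ℝ), ∀ j, X t 1 j = 1 - X t 0 j := by
    intro t ht j
    have := hXsum t ht j
    rw [Fin.sum_univ_two] at this
    linarith
  -- closed-form derivatives
  set P : ℝ → ℝ := fun t =>
    -(Y t 0 * (((2*(X t 0 0 * Y t 0 + X t 0 1 * (1 - Y t 0)) - 1)
      + (2*Y t 0 - 1)*(2*X t 0 0 - 1))
      - 2*(2*(X t 0 0 * Y t 0 + X t 0 1 * (1 - Y t 0)) - 1)*(2*Y t 0 - 1))) with hPdef
  set Qu : ℝ → ℝ := fun t => 2 * X t 0 0 * (1 - X t 0 0) * Y t 0 * (2*Y t 0 - 1) with hQudef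
  set Qv : ℝ → ℝ := fun t => 2 * X t 0 1 * (1 - X t 0 1) * (1 - Y t 0) * (2*Y t 0 - 1) with hQvdef
  have hPapp : ∀ r : ℝ, P r =
    -(Y r 0 * (((2*(X r 0 0 * Y r 0 + X r 0 1 * (1 - Y r 0)) - 1)
      + (2*Y r 0 - 1)*(2*X r 0 0 - 1))
      - 2*(2*(X r 0 0 * Y r 0 + X r 0 1 * (1 - Y r 0)) - 1)*(2*Y r 0 - 1))) := fun _ => rfl
  have hQuapp : ∀ r : ℝ, Qu r = 2 * X r 0 0 * (1 - X r 0 0) * Y r 0 * (2*Y r 0 - 1) := fun _ => rfl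
  have hQvapp : ∀ r : ℝ, Qv r = 2 * X r 0 1 * (1 - X r 0 1) * (1 - Y r 0) * (2*Y r 0 - 1) := fun _ => rfl
  clear_value P Qu Qv
  clear hPdef hQudef hQvdef
  have hp : ∀ t ≥ (0:ℝ), HasDerivAt (fun s => Y s 0) (P t) t := by
    intro t ht
    have h0 := hY t ht 0
    convert h0 using 1
    simp only [Fin.sum_univ_two, Matrix.cons_val_zero, Matrix.cons_val_one, Matrix.head_cons,
      Matrix.cons_val', Matrix.head_fin_const, Matrix.empty_val', Matrix.cons_val_fin_one]
    rw [hPapp t]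
    simp only [hY1 t ht, hX1 t ht 0, hX1 t ht 1]
    ring
  have hu : ∀ t ≥ (0:ℝ), HasDerivAt (fun s => X s 0 0) (Qu t) t := by
    intro t ht
    have h0 := hX t ht 0 0
    convert h0 using 1
    simp only [Fin.sum_univ_two, Matrix.cons_val_zero, Matrix.cons_val_one, Matrix.head_cons,
      Matrix.cons_val', Matrix.head_fin_const, Matrix.empty_val', Matrix.cons_val_fin_one]
    rw [hQuapp t]
    simp only [hY1 t ht, hX1 t ht 0, hX1 t ht 1]
    ring
  have hv : ∀ t ≥ (0:ℝ), HasDerivAt (fun s => X s 0 1) (Qv t) t := by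
    intro t ht
    have h0 := hX t ht 0 1
    convert h0 using 1
    simp only [Fin.sum_univ_two, Matrix.cons_val_zero, Matrix.cons_val_one, Matrix.head_cons,
      Matrix.cons_val', Matrix.head_fin_const, Matrix.empty_val', Matrix.cons_val_fin_one]
    rw [hQvapp t]
    simp only [hY1 t ht, hX1 t ht 0, hX1 t ht 1]
    ring
  -- Lyapunov function
  set Phi : ℝ → ℝ := fun t => -Real.log (Y t 0) - Real.log (1 - Y t 0)
    - 2 * Real.log (X t 0 0) - 2 * Real.log (1 - X t 0 1) with hPhidef
  set Phi' : ℝ → ℝ := fun t => (-(P t / Y t 0) - (-(P t)) / (1 - Y t 0))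
    - 2 * (Qu t / X t 0 0) - 2 * ((-(Qv t)) / (1 - X t 0 1)) with hPhi'def
  have hPhiapp : ∀ r : ℝ, Phi r = -Real.log (Y r 0) - Real.log (1 - Y r 0)
    - 2 * Real.log (X r 0 0) - 2 * Real.log (1 - X r 0 1) := fun _ => rfl
  have hPhi'app : ∀ r : ℝ, Phi' r = (-(P r / Y r 0) - (-(P r)) / (1 - Y r 0))
    - 2 * (Qu r / X r 0 0) - 2 * ((-(Qv r)) / (1 - X r 0 1)) := fun _ => rfl
  clear_value Phi Phi'
  clear hPhidef hPhi'def
  have hbounds : ∀ t ≥ (0:ℝ), 0 < Y t 0 ∧ Y t 0 < 1 ∧ 0 < X t 0 0 ∧ X t 0 0 < 1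
      ∧ 0 < X t 0 1 ∧ X t 0 1 < 1 := by
    intro t ht
    exact ⟨(hYin t ht 0).1, (hYin t ht 0).2, (hXin t ht 0 0).1, (hXin t ht 0 0).2,
      (hXin t ht 0 1).1, (hXin t ht 0 1).2⟩
  have hPhiD : ∀ t ≥ (0:ℝ), HasDerivAt Phi (Phi' t) t := by
    intro t ht
    rw [funext hPhiapp, hPhi'app t]
    obtain ⟨hp0, hp1, hu0, hu1, hv0, hv1⟩ := hbounds t ht
    have l1 : HasDerivAt (fun s => Real.log (Y s 0)) (P t / Y t 0) t :=
      (hp t ht).log (ne_of_gt hp0)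
    have d2 : HasDerivAt (fun s => 1 - Y s 0) (-(P t)) t := by
      exact ((hasDerivAt_const t (1:ℝ)).sub (hp t ht)).congr_deriv (by ring)
    have l2 : HasDerivAt (fun s => Real.log (1 - Y s 0)) ((-(P t)) / (1 - Y t 0)) t :=
      d2.log (by linarith)
    have l3 : HasDerivAt (fun s => Real.log (X s 0 0)) (Qu t / X t 0 0) t :=
      (hu t ht).log (ne_of_gt hu0)
    have d4 : HasDerivAt (fun s => 1 - X s 0 1) (-(Qv t)) t := by
      exact ((hasDerivAt_const t (1:ℝ)).sub (hv t ht)).congr_deriv (by ring)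
    have l4 : HasDerivAt (fun s => Real.log (1 - X s 0 1)) ((-(Qv t)) / (1 - X t 0 1)) t :=
      d4.log (by linarith)
    exact ((l1.neg.sub l2).sub (l3.const_mul 2)).sub (l4.const_mul 2)
  have hPhi'eq : ∀ t ≥ (0:ℝ),
      Phi' t = -(2 * (2 * Y t 0 - 1)^2 * (X t 0 0 + (1 - X t 0 1))) := by
    intro t ht
    obtain ⟨hp0, hp1, hu0, hu1, hv0, hv1⟩ := hbounds t ht
    rw [hPhi'app t, hPapp t, hQuapp t, hQvapp t]
    have n1 : Y t 0 ≠ 0 := ne_of_gt hp0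
    have n2 : (1 : ℝ) - Y t 0 ≠ 0 := by linarith
    have n3 : X t 0 0 ≠ 0 := ne_of_gt hu0
    have n4 : (1 : ℝ) - X t 0 1 ≠ 0 := by linarith
    field_simp
    ring
  set b : ℝ → ℝ := fun t => 2 * Y t 0 - 1 with hbdef
  have hbapp : ∀ r : ℝ, b r = 2 * Y r 0 - 1 := fun _ => rfl
  clear_value b
  clear hbdef
  -- monotonicity of Phi
  have hmono : ∀ s t : ℝ, 0 ≤ s → s ≤ t → Phi t ≤ Phi s := by
    intro s t hs hst
    have := drop_lemma Phi Phi' s t 0 hst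
      (fun r hr => hPhiD r (le_trans hs hr.1))
      (fun r hr => by
        have hr0 : (0:ℝ) ≤ r := le_trans hs hr.1
        obtain ⟨hp0, hp1, hu0, hu1, hv0, hv1⟩ := hbounds r hr0
        rw [hPhi'eq r hr0]
        nlinarith [sq_nonneg (2 * Y r 0 - 1)])
    linarith
  -- uniform lower bounds on u and 1 - v
  have hlog_terms : ∀ t ≥ (0:ℝ), 0 ≤ -Real.log (Y t 0) ∧ 0 ≤ -Real.log (1 - Y t 0)
      ∧ 0 ≤ -Real.log (X t 0 0) ∧ 0 ≤ -Real.log (1 - X t 0 1) := by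
    intro t ht
    obtain ⟨hp0, hp1, hu0, hu1, hv0, hv1⟩ := hbounds t ht
    refine ⟨?_, ?_, ?_, ?_⟩ <;>
      · rw [neg_nonneg]
        apply Real.log_nonpos (by linarith) (by linarith)
  set δ : ℝ := Real.exp (-(Phi 0) / 2) with hδdef
  have hδpos : 0 < δ := by rw [hδdef]; exact Real.exp_pos _
  clear_value δ
  have hδu : ∀ t ≥ (0:ℝ), δ ≤ X t 0 0 := by
    intro t ht
    obtain ⟨hp0, hp1, hu0, hu1, hv0, hv1⟩ := hbounds t ht
    obtain ⟨g1, g2, g3, g4⟩ := hlog_terms t ht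
    have h1 : Phi t ≤ Phi 0 := hmono 0 t le_rfl ht
    have hPt := hPhiapp t
    have h2 : -2 * Real.log (X t 0 0) ≤ Phi 0 := by rw [hPt] at h1; linarith
    have h3 : -(Phi 0) / 2 ≤ Real.log (X t 0 0) := by linarith
    calc δ = Real.exp (-(Phi 0) / 2) := hδdef
      _ ≤ Real.exp (Real.log (X t 0 0)) := Real.exp_le_exp.2 h3
      _ = X t 0 0 := Real.exp_log hu0
  have hδv : ∀ t ≥ (0:ℝ), δ ≤ 1 - X t 0 1 := by
    intro t ht
    obtain ⟨hp0, hp1, hu0, hu1, hv0, hv1⟩ := hbounds t ht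
    obtain ⟨g1, g2, g3, g4⟩ := hlog_terms t ht
    have h1 : Phi t ≤ Phi 0 := hmono 0 t le_rfl ht
    have hPt := hPhiapp t
    have h2 : -2 * Real.log (1 - X t 0 1) ≤ Phi 0 := by rw [hPt] at h1; linarith
    have h3 : -(Phi 0) / 2 ≤ Real.log (1 - X t 0 1) := by linarith
    calc δ = Real.exp (-(Phi 0) / 2) := hδdef
      _ ≤ Real.exp (Real.log (1 - X t 0 1)) := Real.exp_le_exp.2 h3
      _ = 1 - X t 0 1 := Real.exp_log (by linarith)
  -- derivative bound with uniform constant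
  have hle : ∀ t, 0 ≤ t → Phi' t ≤ -(4 * δ * (b t) ^ 2) := by
    intro t ht
    have hbt := hbapp t
    rw [hPhi'eq t ht, hbt]
    have h1 := hδu t ht
    have h2 := hδv t ht
    nlinarith [sq_nonneg (2 * Y t 0 - 1),
      mul_nonneg (sq_nonneg (2 * Y t 0 - 1)) (by linarith : (0:ℝ) ≤ X t 0 0 + (1 - X t 0 1) - 2 * δ)]
  -- nonnegativity of Phi
  have hm : ∀ t, 0 ≤ t → 0 ≤ Phi t := by
    intro t ht
    obtain ⟨g1, g2, g3, g4⟩ := hlog_terms t ht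
    have hPt := hPhiapp t
    rw [hPt]; linarith
  -- Lipschitz bound for b
  have hPbound : ∀ t, 0 ≤ t → |2 * P t| ≤ 8 := by
    intro t ht
    obtain ⟨hp0, hp1, hu0, hu1, hv0, hv1⟩ := hbounds t ht
    set p := Y t 0
    set u := X t 0 0
    set v := X t 0 1
    rw [hPapp t]
    set q : ℝ := 2*(u*p + v*(1-p)) - 1 with hqdef
    set bb : ℝ := 2*p - 1 with hbbdef
    set cc : ℝ := 2*u - 1 with hccdef
    have hq1 : q ≤ 1 := by
      rw [hqdef]
      nlinarith [mul_nonneg (by linarith : (0:ℝ) ≤ 1-u) hp0.le,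
        mul_nonneg (by linarith : (0:ℝ) ≤ 1-v) (by linarith : (0:ℝ) ≤ 1-p)]
    have hq2 : -1 ≤ q := by
      rw [hqdef]
      nlinarith [mul_nonneg hu0.le hp0.le,
        mul_nonneg hv0.le (by linarith : (0:ℝ) ≤ 1-p)]
    have hbb1 : -1 ≤ bb := by rw [hbbdef]; linarith
    have hbb2 : bb ≤ 1 := by rw [hbbdef]; linarith
    have hcc1 : -1 ≤ cc := by rw [hccdef]; linarith
    have hcc2 : cc ≤ 1 := by rw [hccdef]; linarith
    have hbc1 : bb * cc ≤ 1 := by nlinarith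
    have hbc2 : -1 ≤ bb * cc := by nlinarith
    have hqb1 : q * bb ≤ 1 := by nlinarith
    have hqb2 : -1 ≤ q * bb := by nlinarith
    set W : ℝ := q + bb * cc - 2 * (q * bb) with hWdef
    have hW1 : W ≤ 4 := by rw [hWdef]; linarith
    have hW2 : -4 ≤ W := by rw [hWdef]; linarith
    have h5 : p * W ≤ 4 := by nlinarith
    have h6 : -4 ≤ p * W := by nlinarith
    have hrw : -(p * (q + bb * cc - 2 * q * bb)) = -(p * W) := by rw [hWdef]; ring
    rw [hrw]
    rw [abs_le]
    constructor <;> linarith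
  have hlip : ∀ s t : ℝ, 0 ≤ s → s ≤ t → |b t - b s| ≤ 8 * (t - s) := by
    intro s t hs hst
    have hd : ∀ x ∈ Set.Ici (0:ℝ), HasDerivWithinAt b (2 * P x) (Set.Ici (0:ℝ)) x := by
      intro x hx
      have h1 : HasDerivAt (fun s => 2 * Y s 0 - 1) (2 * P x) x := by
        simpa using ((hp x hx).const_mul 2).sub_const 1
      have h2 : b = fun s => 2 * Y s 0 - 1 := funext hbapp
      rw [h2]
      exact h1.hasDerivWithinAt
    have := (convex_Ici (0:ℝ)).norm_image_sub_le_of_norm_hasDerivWithin_le hd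
      (fun x hx => by rw [Real.norm_eq_abs]; exact hPbound x hx)
      (Set.mem_Ici.2 hs) (Set.mem_Ici.2 (le_trans hs hst))
    rw [Real.norm_eq_abs, Real.norm_eq_abs, abs_of_nonneg (by linarith : (0:ℝ) ≤ t - s)] at this
    exact this
  -- apply Barbalat
  have hb0 : Filter.Tendsto b Filter.atTop (nhds 0) :=
    barbalat Phi b Phi' (4 * δ) 8 (by positivity) (by norm_num) hPhiD hle hm hlip
  -- conclude
  have hY0 : Filter.Tendsto (fun t => Y t 0) Filter.atTop (nhds (1/2 : ℝ)) := by
    have h1 : Filter.Tendsto (fun t => (b t + 1) / 2) Filter.atTop (nhds (((0:ℝ) + 1) / 2)) :=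
      (hb0.add_const 1).div_const 2
    have h2 : (fun t => (b t + 1) / 2) = fun t => Y t 0 := by
      funext t
      have hbt := hbapp t
      rw [hbt]; ring
    have h3 : ((0:ℝ) + 1) / 2 = 1/2 := by norm_num
    rw [h2, h3] at h1
    exact h1
  have hY1' : Filter.Tendsto (fun t => Y t 1) Filter.atTop (nhds (1/2 : ℝ)) := by
    have h2 : Filter.Tendsto (fun t => 1 - Y t 0) Filter.atTop (nhds ((1:ℝ) - 1/2)) :=
      tendsto_const_nhds.sub hY0
    rw [show (1:ℝ) - 1/2 = 1/2 by norm_num] at h2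
    have heq : (fun t => 1 - Y t 0) =ᶠ[Filter.atTop] (fun t => Y t 1) := by
      filter_upwards [Filter.eventually_ge_atTop (0:ℝ)] with t ht
      exact (hY1 t ht).symm
    exact Filter.Tendsto.congr' heq h2
  rw [tendsto_pi_nhds]
  intro j
  fin_cases j
  · simpa using hY0
  · simpa using hY1'
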